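/- Let T ≥ 1, let w_1, …, w_T and m_1, …, m_T be vectors in ℝ^d, let G, c, S > 0, and suppose the rounds {1, …, T} are partitioned into N consecutive epochs with start indices 1 = l_1 < l_2 < ⋯ < l_N ≤ T (setting l_{N+1} = T + 1) such that: (i) ‖m_t‖ = G for all t; (ii) m_t = m_{l_τ} for every t with l_τ ≤ t < l_{τ+1}; (iii) ⟨m_{l_τ}, Σ_{j=1}^{l_τ−1} m_j⟩ ≥ 0 for every τ = 2, …, N; (iv) for every τ = 1, …, N−1, Σ_{j=l_τ+1}^{l_{τ+1}} ‖w_j − w_{j−1}‖ > c/S; and (v) Σ_{t=2}^T ‖w_t − w_{t−1}‖ ≤ S. Then ‖Σ_{t=1}^T m_t‖ ≥ G·T·√c / √(S² + c). -/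

import Mathlib

open scoped InnerProductSpace BigOperators

/-- **Lemma 2.** If the rounds `1, …, T` are partitioned into `N` consecutive
epochs with start indices `1 = l 1 < l 2 < ⋯ < l N ≤ T` (with `l (N+1) = T + 1`) such that
(i) `‖m t‖ = G`, (ii) `m` is constant on each epoch, (iii) `⟪m (l τ), ∑_{j=1}^{l τ − 1} m j⟫ ≥ 0`
for `τ = 2, …, N`, (iv) each of the first `N − 1` epochs accumulates switching cost more than
`c / S` (through its closing round), and (v) the total switching cost is at most `S`, then
`‖∑_{t=1}^T m t‖ ≥ G·T·√c / √(S² + c)`. -/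
theorem stmt4 (d T N : ℕ) (hT : 1 ≤ T) (hN : 1 ≤ N)
    (w m : ℕ → EuclideanSpace ℝ (Fin d)) (G c S : ℝ) (hG : 0 < G) (hc : 0 < c) (hS : 0 < S)
    (l : ℕ → ℕ) (hl1 : l 1 = 1) (hlmono : ∀ τ, 1 ≤ τ → τ < N → l τ < l (τ + 1))
    (hlN : l N ≤ T) (hlN1 : l (N + 1) = T + 1)
    (hnorm : ∀ t ∈ Finset.Icc 1 T, ‖m t‖ = G)
    (hconst : ∀ τ ∈ Finset.Icc 1 N, ∀ t, l τ ≤ t → t < l (τ + 1) → m t = m (l τ))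
    (horth : ∀ τ ∈ Finset.Icc 2 N, 0 ≤ ⟪m (l τ), ∑ j ∈ Finset.Icc 1 (l τ - 1), m j⟫_ℝ)
    (hsw : ∀ τ ∈ Finset.Icc 1 (N - 1),
      c / S < ∑ j ∈ Finset.Icc (l τ + 1) (l (τ + 1)), ‖w j - w (j - 1)‖)
    (htotal : ∑ t ∈ Finset.Icc 2 T, ‖w t - w (t - 1)‖ ≤ S) :
    ‖∑ t ∈ Finset.Icc 1 T, m t‖ ≥ G * T * Real.sqrt c / Real.sqrt (S ^ 2 + c) := by
  -- strict monotonicity on [1, N]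
  have hmono' : ∀ τ, 1 ≤ τ → τ ≤ N → l τ < l (τ + 1) := by
    intro τ h1 h2
    rcases lt_or_eq_of_le h2 with h | h
    · exact hlmono τ h1 h
    · subst h; omega
  have hmono2 : ∀ σ τ, 1 ≤ σ → σ ≤ τ → τ ≤ N + 1 → l σ ≤ l τ := by
    intro σ τ h1
    induction τ with
    | zero => intro h2 _; omega
    | succ k ih =>
      intro h2 h3
      rcases Nat.lt_or_ge σ (k + 1) with h | h
      · have hk1 : 1 ≤ k := by omega
        have h4 := ih (by omega) (by omega)
        have h5 := hmono' k hk1 (by omega)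
        omega
      · have hσ : σ = k + 1 := by omega
        rw [hσ]
  have hge1 : ∀ τ, 1 ≤ τ → τ ≤ N + 1 → 1 ≤ l τ := by
    intro τ h1 h2
    have := hmono2 1 τ le_rfl h1 h2
    omega
  -- length of epoch τ
  set len : ℕ → ℕ := fun τ => l (τ + 1) - l τ with hlen
  -- telescoping sum of lengths
  have hsumlen : ∀ k, k ≤ N → ∑ σ ∈ Finset.Icc 1 k, len σ = l (k + 1) - 1 := by
    intro k
    induction k with
    | zero => intro _; simp [hl1]
    | succ j ih =>
      intro hk
      rw [Finset.sum_Icc_succ_top (by omega)]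
      rw [ih (by omega)]
      have h1 : 1 ≤ l (j + 1) := hge1 _ (by omega) (by omega)
      have h2 : l (j + 1) < l (j + 2) := hmono' (j + 1) (by omega) (by omega)
      have h3 : l (j + 1 + 1) = l (j + 2) := rfl
      simp only [hlen]
      omega
  -- key lower bound by induction
  have key : ∀ τ, 1 ≤ τ → τ ≤ N →
      G ^ 2 * ∑ σ ∈ Finset.Icc 1 τ, ((len σ : ℝ)) ^ 2 ≤
        ‖∑ t ∈ Finset.Icc 1 (l (τ + 1) - 1), m t‖ ^ 2 := by
    intro τ h1τ
    induction τ with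
    | zero => omega
    | succ k ih =>
      intro hkN
      simp only [show k + 1 + 1 = k + 2 from rfl]
      -- decomposition of the sum up to epoch k+1
      have hlk1 : 1 ≤ l (k + 1) := hge1 _ (by omega) (by omega)
      have hlk2 : l (k + 1) < l (k + 2) := hmono' (k + 1) (by omega) (by omega)
      have hll : l (k + 1 + 1) = l (k + 2) := rfl
      have hsplit : ∑ t ∈ Finset.Icc 1 (l (k + 2) - 1), m t =
          (∑ t ∈ Finset.Icc 1 (l (k + 1) - 1), m t) +
            (len (k + 1) : ℕ) • m (l (k + 1)) := by
        have e1 : Finset.Icc 1 (l (k + 2) - 1) = Finset.Ioc 0 (l (k + 2) - 1) := by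
          exact Finset.Icc_add_one_left_eq_Ioc _ _
        have e2 : Finset.Icc 1 (l (k + 1) - 1) = Finset.Ioc 0 (l (k + 1) - 1) := by
          exact Finset.Icc_add_one_left_eq_Ioc _ _
        rw [e1, e2, ← Finset.sum_Ioc_consecutive _ (Nat.zero_le (l (k + 1) - 1)) (by omega)]
        congr 1
        have e3 : Finset.Ioc (l (k + 1) - 1) (l (k + 2) - 1) =
            Finset.Icc (l (k + 1)) (l (k + 2) - 1) := by
          rw [← Finset.Icc_add_one_left_eq_Ioc]
          congr 1
          omega
        rw [e3]
        have : ∀ t ∈ Finset.Icc (l (k + 1)) (l (k + 2) - 1), m t = m (l (k + 1)) := by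
          intro t ht
          rw [Finset.mem_Icc] at ht
          exact hconst (k + 1) (by rw [Finset.mem_Icc]; omega) t ht.1 (by omega)
        rw [Finset.sum_congr rfl this, Finset.sum_const, Nat.card_Icc]
        congr 1
        simp only [hlen]
        omega
      have hltT : l (k + 1) ≤ T := by
        have := hmono2 (k + 1) N (by omega) (by omega) (by omega)
        omega
      have hnormk : ‖m (l (k + 1))‖ = G := hnorm _ (by rw [Finset.mem_Icc]; omega)
      have hinner : 0 ≤ ⟪m (l (k + 1)), ∑ j ∈ Finset.Icc 1 (l (k + 1) - 1), m j⟫_ℝ := by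
        rcases Nat.eq_or_lt_of_le (show 1 ≤ k + 1 by omega) with h | h
        · have : l (k + 1) - 1 = 0 := by rw [← h, hl1]
          rw [this]
          simp
        · exact horth (k + 1) (by rw [Finset.mem_Icc]; omega)
      -- norm expansion
      set a := ∑ t ∈ Finset.Icc 1 (l (k + 1) - 1), m t with ha
      set b := m (l (k + 1)) with hb
      set r : ℝ := (len (k + 1) : ℝ) with hr
      have hrnn : (0 : ℝ) ≤ r := Nat.cast_nonneg _
      have hcast : ((len (k + 1) : ℕ) • b) = r • b := (Nat.cast_smul_eq_nsmul ℝ _ _).symm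
      have hexp : ‖a + (len (k + 1) : ℕ) • b‖ ^ 2 =
          ‖a‖ ^ 2 + 2 * (r * ⟪b, a⟫_ℝ) + r ^ 2 * G ^ 2 := by
        rw [hcast, norm_add_sq_real, real_inner_smul_right, norm_smul, Real.norm_eq_abs,
          abs_of_nonneg hrnn, hnormk, real_inner_comm]
        ring
      have hstep : ‖a‖ ^ 2 + G ^ 2 * r ^ 2 ≤ ‖∑ t ∈ Finset.Icc 1 (l (k + 2) - 1), m t‖ ^ 2 := by
        rw [hsplit, hexp]
        nlinarith [mul_nonneg hrnn hinner]
      rw [Finset.sum_Icc_succ_top (show 1 ≤ k + 1 by omega), mul_add]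
      rcases Nat.eq_zero_or_pos k with hk0 | hk0
      · subst hk0
        have h0 : a = 0 := by
          rw [ha, hl1]
          simp
        have heq : G ^ 2 * ∑ σ ∈ Finset.Icc 1 0, ((len σ : ℝ)) ^ 2
            + G ^ 2 * (len (0 + 1) : ℝ) ^ 2 = ‖a‖ ^ 2 + G ^ 2 * r ^ 2 := by
          rw [h0]
          simp [hr]
        rw [heq]
        exact hstep
      · have ihk := ih (by omega) (by omega)
        calc G ^ 2 * ∑ σ ∈ Finset.Icc 1 k, ((len σ : ℝ)) ^ 2 + G ^ 2 * (len (k + 1) : ℝ) ^ 2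
            ≤ ‖a‖ ^ 2 + G ^ 2 * r ^ 2 := by
              have h9 : G ^ 2 * ∑ σ ∈ Finset.Icc 1 k, ((len σ : ℝ)) ^ 2 ≤ ‖a‖ ^ 2 := ihk
              rw [hr]; linarith
          _ ≤ _ := hstep
  -- total length is T
  have hsumT : ∑ σ ∈ Finset.Icc 1 N, len σ = T := by
    rw [hsumlen N le_rfl, hlN1]
    omega
  -- Cauchy-Schwarz
  have hCS : (T : ℝ) ^ 2 ≤ (N : ℝ) * ∑ σ ∈ Finset.Icc 1 N, ((len σ : ℝ)) ^ 2 := by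
    have h := sq_sum_le_card_mul_sum_sq (s := Finset.Icc 1 N)
      (f := fun σ => ((len σ : ℝ)))
    have hc1 : (∑ σ ∈ Finset.Icc 1 N, ((len σ : ℝ))) = (T : ℝ) := by
      rw [← Nat.cast_sum, hsumT]
    have hc2 : ((Finset.Icc 1 N).card : ℝ) = (N : ℝ) := by
      rw [Nat.card_Icc]; simp
    rw [hc1, hc2] at h
    exact h
  -- bound on N : (N : ℝ) * c ≤ S^2 + c
  have hNbound : (N : ℝ) * c ≤ S ^ 2 + c := by
    rcases Nat.lt_or_ge N 2 with h2 | h2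
    · interval_cases N
      push_cast
      nlinarith [sq_nonneg S]
    · have hdisj : ∀ k, k ≤ N - 1 →
          ∑ τ ∈ Finset.Icc 1 k, ∑ j ∈ Finset.Icc (l τ + 1) (l (τ + 1)), ‖w j - w (j - 1)‖ =
            ∑ j ∈ Finset.Ioc (l 1) (l (k + 1)), ‖w j - w (j - 1)‖ := by
        intro k
        induction k with
        | zero => intro _; simp
        | succ i ih =>
          intro hk
          rw [Finset.sum_Icc_succ_top (by omega), ih (by omega)]
          simp only [show i + 1 + 1 = i + 2 from rfl]
          have e : Finset.Icc (l (i + 1) + 1) (l (i + 2)) =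
              Finset.Ioc (l (i + 1)) (l (i + 2)) := Finset.Icc_add_one_left_eq_Ioc _ _
          rw [e, Finset.sum_Ioc_consecutive]
          · exact hmono2 1 (i + 1) le_rfl (by omega) (by omega)
          · exact le_of_lt (hmono' (i + 1) (by omega) (by omega))
      have hsub : ∑ j ∈ Finset.Ioc (l 1) (l N), ‖w j - w (j - 1)‖ ≤
          ∑ t ∈ Finset.Icc 2 T, ‖w t - w (t - 1)‖ := by
        apply Finset.sum_le_sum_of_subset_of_nonneg
        · intro x hx
          rw [Finset.mem_Ioc] at hx
          rw [Finset.mem_Icc]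
          rw [hl1] at hx
          omega
        · intro x _ _
          positivity
      have hne : (Finset.Icc 1 (N - 1)).Nonempty := by
        rw [Finset.nonempty_Icc]; omega
      have hlt := Finset.sum_lt_sum_of_nonempty hne hsw
      rw [Finset.sum_const, Nat.card_Icc, nsmul_eq_mul] at hlt
      have hcard : (N - 1 + 1 - 1 : ℕ) = N - 1 := by omega
      rw [hcard] at hlt
      have hcast : ((N - 1 : ℕ) : ℝ) = (N : ℝ) - 1 := by
        push_cast [Nat.cast_sub hN]
        ring
      rw [hcast] at hlt
      have hNe : N - 1 + 1 = N := by omega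
      rw [hdisj (N - 1) le_rfl, hNe] at hlt
      have hx : ((N : ℝ) - 1) * (c / S) < S := lt_of_lt_of_le (lt_of_lt_of_le hlt hsub) htotal
      have heq : ((N : ℝ) - 1) * (c / S) * S = ((N : ℝ) - 1) * c := by
        field_simp
      have h' := mul_lt_mul_of_pos_right hx hS
      rw [heq] at h'
      nlinarith
  -- assemble
  have hmain : G ^ 2 * (T : ℝ) ^ 2 * c / (S ^ 2 + c) ≤ ‖∑ t ∈ Finset.Icc 1 T, m t‖ ^ 2 := by
    have hk := key N hN le_rfl
    rw [hlN1] at hk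
    simp only [Nat.add_sub_cancel] at hk
    have hNpos : (0 : ℝ) < (N : ℝ) := by exact_mod_cast hN
    have hSc : (0 : ℝ) < S ^ 2 + c := by positivity
    have h1 : (T : ℝ) ^ 2 / (N : ℝ) ≤ ∑ σ ∈ Finset.Icc 1 N, ((len σ : ℝ)) ^ 2 := by
      rw [div_le_iff₀ hNpos]
      linarith [hCS]
    have h2 : G ^ 2 * ((T : ℝ) ^ 2 / (N : ℝ)) ≤ ‖∑ t ∈ Finset.Icc 1 T, m t‖ ^ 2 := by
      calc G ^ 2 * ((T : ℝ) ^ 2 / (N : ℝ))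
          ≤ G ^ 2 * ∑ σ ∈ Finset.Icc 1 N, ((len σ : ℝ)) ^ 2 := by
            apply mul_le_mul_of_nonneg_left h1 (by positivity)
        _ ≤ _ := hk
    refine le_trans ?_ h2
    have hfrac : c / (S ^ 2 + c) ≤ 1 / (N : ℝ) := by
      rw [div_le_div_iff₀ hSc hNpos]
      nlinarith
    calc G ^ 2 * (T : ℝ) ^ 2 * c / (S ^ 2 + c)
        = (G ^ 2 * (T : ℝ) ^ 2) * (c / (S ^ 2 + c)) := by ring
      _ ≤ (G ^ 2 * (T : ℝ) ^ 2) * (1 / (N : ℝ)) := by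
          apply mul_le_mul_of_nonneg_left hfrac (by positivity)
      _ = G ^ 2 * ((T : ℝ) ^ 2 / (N : ℝ)) := by ring
  -- take square roots
  have hrhs_nn : 0 ≤ G * T * Real.sqrt c / Real.sqrt (S ^ 2 + c) := by positivity
  have hlhs_nn : (0 : ℝ) ≤ ‖∑ t ∈ Finset.Icc 1 T, m t‖ := norm_nonneg _
  have hsq : (G * T * Real.sqrt c / Real.sqrt (S ^ 2 + c)) ^ 2 =
      G ^ 2 * (T : ℝ) ^ 2 * c / (S ^ 2 + c) := by
    rw [div_pow, mul_pow, mul_pow, Real.sq_sqrt hc.le,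
      Real.sq_sqrt (by positivity : (0:ℝ) ≤ S ^ 2 + c)]
  have hfin : (G * T * Real.sqrt c / Real.sqrt (S ^ 2 + c)) ^ 2 ≤
      ‖∑ t ∈ Finset.Icc 1 T, m t‖ ^ 2 := by rw [hsq]; exact hmain
  have h := Real.sqrt_le_sqrt hfin
  rwa [Real.sqrt_sq hrhs_nn, Real.sqrt_sq hlhs_nn] at h
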